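/- arXiv:0911.4027 — 16 statements merged into one kernel-verified Lean document; each statement's English description precedes it below -/
import Mathlib

section
/- Let P and Q be n×n real symmetric idempotent matrices and λ a real scalar such that Q·P·Q = λ·Q and Q ≠ 0. Then 0 ≤ λ ≤ 1. -/
open Matrix

lemma sym_dot {n : ℕ} (A : Matrix (Fin n) (Fin n) ℝ) (hA : Aᵀ = A)
    (v w : Fin n → ℝ) : v ⬝ᵥ (A *ᵥ w) = (A *ᵥ v) ⬝ᵥ w := by
  conv_lhs => rw [← hA]
  rw [Matrix.dotProduct_mulVec, Matrix.vecMul_transpose]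

/-- Efficiency factors necessarily lie between 0 and 1. -/
theorem efficiency_factor_mem_unitInterval
    {n : ℕ} (P Q : Matrix (Fin n) (Fin n) ℝ)
    (hPsym : Pᵀ = P) (hPidem : P * P = P)
    (hQsym : Qᵀ = Q) (hQidem : Q * Q = Q)
    (lam : ℝ) (hbal : Q * P * Q = lam • Q) (hQne : Q ≠ 0) :
    0 ≤ lam ∧ lam ≤ 1 := by
  -- find a nonzero column of Q
  obtain ⟨i, j, hij⟩ : ∃ i j, Q i j ≠ 0 := by
    by_contra h
    push_neg at h
    exact hQne (by ext a b; simpa using h a b)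
  set v : Fin n → ℝ := fun k => Q k j with hv
  have hvne : v ≠ 0 := fun h => hij (by simpa [hv] using congrFun h i)
  have hQv : Q *ᵥ v = v := by
    ext k
    have := congrFun (congrFun hQidem k) j
    simpa [Matrix.mul_apply, Matrix.mulVec, dotProduct, hv] using this
  set u : Fin n → ℝ := P *ᵥ v with hu
  have hPu : P *ᵥ u = u := by rw [hu, Matrix.mulVec_mulVec, hPidem]
  -- key equation
  have h3 : v ⬝ᵥ u = u ⬝ᵥ u :=
    calc v ⬝ᵥ u = v ⬝ᵥ (P *ᵥ u) := by rw [hPu]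
      _ = (P *ᵥ v) ⬝ᵥ u := sym_dot P hPsym v u
      _ = u ⬝ᵥ u := by rw [← hu]
  have hkey : u ⬝ᵥ u = lam * (v ⬝ᵥ v) := by
    have h1 : v ⬝ᵥ ((Q * P * Q) *ᵥ v) = lam * (v ⬝ᵥ v) := by
      rw [hbal]
      simp [Matrix.smul_mulVec, hQv, smul_eq_mul]
    have h2 : v ⬝ᵥ ((Q * P * Q) *ᵥ v) = v ⬝ᵥ u := by
      rw [← Matrix.mulVec_mulVec, ← Matrix.mulVec_mulVec, hQv,
        sym_dot Q hQsym, hQv, hu]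
    rw [← h3, ← h2, h1]
  have hvv : 0 < v ⬝ᵥ v := by
    rcases (Finset.sum_nonneg (fun k _ => mul_self_nonneg (v k)) :
        (0:ℝ) ≤ v ⬝ᵥ v).lt_or_eq with h | h
    · exact h
    · exact absurd (dotProduct_self_eq_zero.mp h.symm) hvne
  have huu : (0:ℝ) ≤ u ⬝ᵥ u := Finset.sum_nonneg (fun k _ => mul_self_nonneg (u k))
  have hcs : (v ⬝ᵥ u) ^ 2 ≤ (v ⬝ᵥ v) * (u ⬝ᵥ u) := by
    have := Finset.sum_mul_sq_le_sq_mul_sq Finset.univ v u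
    simpa [dotProduct, sq] using this
  constructor
  · nlinarith
  · have h4 := hcs
    rw [h3, hkey] at h4
    have hlam0 : 0 ≤ lam := by nlinarith
    have hsq : lam ^ 2 ≤ lam := by nlinarith [mul_pos hvv hvv]
    nlinarith
end

section
/- Let P and Q be n×n real symmetric idempotent matrices and λ a nonzero real scalar with Q·P·Q = λ·Q. Then the matrix λ⁻¹·P·Q·P is a symmetric idempotent. -/
open Matrix

/-- James–Wilkinson: if `Q P Q = λ Q` with `λ ≠ 0`, then the pertaining projector
`P ▷ Q := λ⁻¹ P Q P` is a symmetric idempotent. -/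
theorem pertaining_projector_isSymmIdem
    {n : ℕ} (P Q : Matrix (Fin n) (Fin n) ℝ)
    (hPsym : Pᵀ = P) (hPidem : P * P = P)
    (hQsym : Qᵀ = Q) (hQidem : Q * Q = Q)
    (lam : ℝ) (hlam : lam ≠ 0) (hbal : Q * P * Q = lam • Q) :
    (lam⁻¹ • (P * Q * P))ᵀ = lam⁻¹ • (P * Q * P) ∧
      (lam⁻¹ • (P * Q * P)) * (lam⁻¹ • (P * Q * P)) = lam⁻¹ • (P * Q * P) := by
  constructor
  · rw [transpose_smul, transpose_mul, transpose_mul, hPsym, hQsym, mul_assoc]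
  · have key : (P * Q * P) * (P * Q * P) = lam • (P * Q * P) := by
      calc (P * Q * P) * (P * Q * P) = P * (Q * P * Q) * P := by
            rw [show (P * Q * P) * (P * Q * P) = P * Q * (P * P) * Q * P by
              simp only [mul_assoc], hPidem]; simp only [mul_assoc]
        _ = lam • (P * Q * P) := by
            rw [hbal, Matrix.mul_smul, Matrix.smul_mul]
    rw [smul_mul_smul_comm, key, smul_smul]
    congr 1
    field_simp
end

section
/- Let P and Q be n×n real symmetric idempotent matrices and λ a nonzero real scalar with Q·P·Q = λ·Q. Then the column space of λ⁻¹·P·Q·P equals the image P(Im Q) of the column space of Q under P, i.e., the range of the linear map given by P·Q·P equals the range of the linear map given by P·Q. -/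
open Matrix

/-- James–Wilkinson: if `Q P Q = λ Q` with `λ ≠ 0`, then `λ⁻¹ P Q P` projects
onto `P(Im Q)`: the range of the linear map given by `P * Q * P` equals the
range of the linear map given by `P * Q`. -/
theorem pertaining_projector_range
    {n : ℕ} (P Q : Matrix (Fin n) (Fin n) ℝ)
    (hPsym : Pᵀ = P) (hPidem : P * P = P)
    (hQsym : Qᵀ = Q) (hQidem : Q * Q = Q)
    (lam : ℝ) (hlam : lam ≠ 0) (hbal : Q * P * Q = lam • Q) :
    LinearMap.range (P * Q * P).mulVecLin = LinearMap.range (P * Q).mulVecLin := by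
  have key : (P * Q * P) * Q = lam • (P * Q) := by
    rw [Matrix.mul_assoc (P * Q), Matrix.mul_assoc P, ← Matrix.mul_assoc Q, hbal,
      Matrix.mul_smul]
  apply le_antisymm
  · rintro x ⟨y, rfl⟩
    refine ⟨P.mulVec y, ?_⟩
    simp only [Matrix.mulVecLin_apply, Matrix.mulVec_mulVec, Matrix.mul_assoc]
  · rintro x ⟨y, rfl⟩
    refine ⟨lam⁻¹ • Q.mulVec y, ?_⟩
    simp only [Matrix.mulVecLin_apply, Matrix.mulVec_smul, Matrix.mulVec_mulVec, key,
      Matrix.smul_mulVec, smul_smul, inv_mul_cancel₀ hlam, one_smul]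
end

section
/- Let P and Q be n×n real symmetric idempotent matrices and λ a nonzero real scalar with Q·P·Q = λ·Q and Q ≠ 0. Then λ is the unique nonzero eigenvalue of P·Q·P: every nonzero eigenvalue of P·Q·P equals λ, and λ is an eigenvalue of P·Q·P. -/
open Matrix

/-- James–Wilkinson: if `Q P Q = λ Q` with `λ ≠ 0` and `Q ≠ 0`, then `λ` is the
unique nonzero eigenvalue of `P Q P`. -/
theorem efficiency_factor_unique_nonzero_eigenvalue
    {n : ℕ} (P Q : Matrix (Fin n) (Fin n) ℝ)
    (hPsym : Pᵀ = P) (hPidem : P * P = P)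
    (hQsym : Qᵀ = Q) (hQidem : Q * Q = Q)
    (lam : ℝ) (hlam : lam ≠ 0) (hbal : Q * P * Q = lam • Q) (hQne : Q ≠ 0) :
    (∀ μ : ℝ, μ ≠ 0 →
        (∃ v : Fin n → ℝ, v ≠ 0 ∧ (P * Q * P).mulVec v = μ • v) → μ = lam) ∧
      (∃ v : Fin n → ℝ, v ≠ 0 ∧ (P * Q * P).mulVec v = lam • v) := by
  have key : (P * Q * P) * (P * Q) = lam • (P * Q) := by
    have h1 : (P * Q * P) * (P * Q) = P * Q * (P * P) * Q := by noncomm_ring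
    have h2 : P * Q * P * Q = P * (Q * P * Q) := by noncomm_ring
    rw [h1, hPidem, h2, hbal, Matrix.mul_smul]
  have hA2 : (P * Q * P) * (P * Q * P) = lam • (P * Q * P) := by
    calc (P * Q * P) * (P * Q * P) = P * Q * (P * P) * (Q * P) := by noncomm_ring
      _ = P * Q * P * (Q * P) := by rw [hPidem]
      _ = (P * (Q * P * Q)) * P := by noncomm_ring
      _ = (P * (lam • Q)) * P := by rw [hbal]
      _ = lam • (P * Q * P) := by rw [Matrix.mul_smul, Matrix.smul_mul]
  constructor
  · rintro μ hμ ⟨v, hv, hev⟩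
    have h2 : ((P * Q * P) * (P * Q * P)).mulVec v = (μ * μ) • v := by
      rw [← Matrix.mulVec_mulVec, hev, Matrix.mulVec_smul, hev, smul_smul]
    rw [hA2, Matrix.smul_mulVec, hev, smul_smul] at h2
    obtain ⟨i, hi⟩ := Function.ne_iff.mp hv
    simp only [Pi.zero_apply] at hi
    have hcomp := congrFun h2 i
    simp only [Pi.smul_apply, smul_eq_mul] at hcomp
    have hμμ : μ * μ = lam * μ := mul_right_cancel₀ hi hcomp.symm
    exact mul_right_cancel₀ hμ hμμ
  · have hPQne : P * Q ≠ 0 := by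
      intro h
      have hQP : Q * P = 0 := by
        calc Q * P = (P * Q)ᵀ := by rw [Matrix.transpose_mul, hPsym, hQsym]
          _ = 0 := by rw [h, Matrix.transpose_zero]
      rw [hQP, Matrix.zero_mul] at hbal
      rcases smul_eq_zero.mp hbal.symm with h' | h'
      · exact hlam h'
      · exact hQne h'
    have : ∃ y : Fin n → ℝ, (P * Q).mulVec y ≠ 0 := by
      by_contra h
      push_neg at h
      apply hPQne
      ext i j
      have := congrFun (h (Pi.single j 1)) i
      simpa [Matrix.mulVec, dotProduct, Pi.single_apply] using this
    obtain ⟨y, hy⟩ := this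
    refine ⟨(P * Q).mulVec y, hy, ?_⟩
    rw [Matrix.mulVec_mulVec, key, Matrix.smul_mulVec]
end

section
/- Let P and Q be n×n real symmetric idempotent matrices and λ a nonzero real scalar with Q·P·Q = λ·Q. Then rank(P·Q·P) = rank(Q); equivalently, the subspace P(Im Q) has the same dimension as the column space of Q. -/
open Matrix

lemma rank_smul_le_aux {n : ℕ} (c : ℝ) (A : Matrix (Fin n) (Fin n) ℝ) :
    (c • A).rank ≤ A.rank := by
  have h : c • A = (c • (1 : Matrix (Fin n) (Fin n) ℝ)) * A := by
    rw [smul_mul, one_mul]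
  rw [h]
  exact Matrix.rank_mul_le_right _ _

lemma rank_smul_eq_aux {n : ℕ} (c : ℝ) (hc : c ≠ 0) (A : Matrix (Fin n) (Fin n) ℝ) :
    (c • A).rank = A.rank := by
  refine le_antisymm (rank_smul_le_aux c A) ?_
  have h : A = c⁻¹ • (c • A) := by rw [smul_smul, inv_mul_cancel₀ hc, one_smul]
  calc A.rank = (c⁻¹ • (c • A)).rank := by rw [← h]
    _ ≤ (c • A).rank := rank_smul_le_aux _ _

/-- If `Q P Q = λ Q` with `λ ≠ 0`, then `rank (P Q P) = rank Q`: the projected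
space `P(Im Q)` has the same dimension as `Im Q`. -/
theorem rank_pertaining_eq_rank
    {n : ℕ} (P Q : Matrix (Fin n) (Fin n) ℝ)
    (hPsym : Pᵀ = P) (hPidem : P * P = P)
    (hQsym : Qᵀ = Q) (hQidem : Q * Q = Q)
    (lam : ℝ) (hlam : lam ≠ 0) (hbal : Q * P * Q = lam • Q) :
    (P * Q * P).rank = Q.rank := by
  have h1 : Q * (P * Q * P) * Q = (lam * lam) • Q := by
    calc Q * (P * Q * P) * Q = (Q * P * Q) * (P * Q) := by
          simp only [mul_assoc]
      _ = (lam * lam) • Q := by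
          rw [hbal, smul_mul_assoc, ← mul_assoc, hbal, smul_smul]
  refine le_antisymm ?_ ?_
  · calc (P * Q * P).rank ≤ (P * Q).rank := Matrix.rank_mul_le_left _ _
      _ ≤ Q.rank := Matrix.rank_mul_le_right _ _
  · calc Q.rank = ((lam * lam) • Q).rank :=
          (rank_smul_eq_aux _ (mul_ne_zero hlam hlam) _).symm
      _ = (Q * (P * Q * P) * Q).rank := by rw [h1]
      _ ≤ (Q * (P * Q * P)).rank := Matrix.rank_mul_le_left _ _
      _ ≤ (P * Q * P).rank := Matrix.rank_mul_le_right _ _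
end

section
/- Let P and Q be n×n real symmetric idempotent matrices with Q·P·Q = Q (efficiency factor 1). Then P·Q = Q = Q·P, P·Q·P = Q, and the column space of Q is contained in the column space of P. -/
open Matrix

/-- Lemma 4.1: if the efficiency factor is 1, i.e. `Q P Q = Q`, then
`P Q = Q = Q P`, `P Q P = Q`, and `Im Q ≤ Im P`. -/
theorem efficiency_one_of_first_order_balance
    {n : ℕ} (P Q : Matrix (Fin n) (Fin n) ℝ)
    (hPsym : Pᵀ = P) (hPidem : P * P = P)
    (hQsym : Qᵀ = Q) (hQidem : Q * Q = Q)
    (hbal : Q * P * Q = Q) :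
    P * Q = Q ∧ Q * P = Q ∧ P * Q * P = Q ∧
      LinearMap.range Q.mulVecLin ≤ LinearMap.range P.mulVecLin := by
  have key : P * Q = Q := by
    have h0 : (P * Q - Q)ᴴ * (P * Q - Q) = 0 := by
      have hT : (P * Q - Q)ᴴ = Q * P - Q := by
        simp [conjTranspose, Matrix.transpose_sub, Matrix.transpose_mul, hPsym, hQsym]
        ext i j
        simp
      rw [hT]
      have : (Q * P - Q) * (P * Q - Q)
          = Q * P * (P * Q) - Q * P * Q - Q * (P * Q) + Q * Q := by noncomm_ring
      rw [this]
      have h1 : Q * P * (P * Q) = Q := by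
        calc Q * P * (P * Q) = Q * (P * P) * Q := by noncomm_ring
        _ = Q := by rw [hPidem, hbal]
      have h2 : Q * (P * Q) = Q := by rw [← mul_assoc, hbal]
      rw [h1, h2, hbal, hQidem]; abel
    have := (Matrix.conjTranspose_mul_self_eq_zero).mp h0
    linear_combination (norm := abel) this
  have key2 : Q * P = Q := by
    have : (P * Q)ᵀ = Q * P := by rw [Matrix.transpose_mul, hPsym, hQsym]
    rw [key, hQsym] at this; exact this.symm
  refine ⟨key, key2, by rw [key, key2], ?_⟩
  rintro x ⟨v, rfl⟩
  refine ⟨Q *ᵥ v, ?_⟩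
  simp [mulVecLin, mulVec_mulVec, key]
end

section
/- Let P be an n×n real symmetric idempotent matrix and let Q₁, Q₂ be n×n real symmetric idempotent matrices with Q₁·P·Q₂ = 0, Q₁·P·Q₁ = λ₁·Q₁ and Q₂·P·Q₂ = λ₂·Q₂ for nonzero real scalars λ₁, λ₂. Then (λ₁⁻¹·P·Q₁·P)·(λ₂⁻¹·P·Q₂·P) = 0; that is, the pertaining projectors P▷Q₁ and P▷Q₂ project onto mutually orthogonal subspaces of Im P. -/
open Matrix

/-- Pertaining projectors `P ▷ Q₁` and `P ▷ Q₂` project onto mutually orthogonal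
subspaces of `Im P` when `Q₁ P Q₂ = 0`. -/
theorem pertaining_projectors_mutually_orthogonal
    {n : ℕ} (P Q₁ Q₂ : Matrix (Fin n) (Fin n) ℝ)
    (hPsym : Pᵀ = P) (hPidem : P * P = P)
    (hQ₁sym : Q₁ᵀ = Q₁) (hQ₁idem : Q₁ * Q₁ = Q₁)
    (hQ₂sym : Q₂ᵀ = Q₂) (hQ₂idem : Q₂ * Q₂ = Q₂)
    (lam₁ lam₂ : ℝ) (hlam₁ : lam₁ ≠ 0) (hlam₂ : lam₂ ≠ 0)
    (horth : Q₁ * P * Q₂ = 0)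
    (hbal₁ : Q₁ * P * Q₁ = lam₁ • Q₁) (hbal₂ : Q₂ * P * Q₂ = lam₂ • Q₂) :
    (lam₁⁻¹ • (P * Q₁ * P)) * (lam₂⁻¹ • (P * Q₂ * P)) = 0 := by
  have key : (P * Q₁ * P) * (P * Q₂ * P) = 0 := by
    calc (P * Q₁ * P) * (P * Q₂ * P)
        = P * (Q₁ * P * Q₂) * P := by
          rw [show P * Q₁ * P * (P * Q₂ * P) = P * Q₁ * (P * P) * Q₂ * P by
            simp [mul_assoc], hPidem]; simp [mul_assoc]
      _ = 0 := by rw [horth]; simp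
  rw [smul_mul_smul, key, smul_zero]
end

section
/- Let P be an n×n real symmetric idempotent matrix and let (Q_j)_{j∈J} be a finite mutually orthogonal family of n×n real symmetric idempotents that is structure balanced in relation to P with efficiency factors (λ_j)_{j∈J}. Define the residual P⊢𝒬 := P − Σ_{j : λ_j ≠ 0} λ_j⁻¹·P·Q_j·P. Then P⊢𝒬 is a symmetric idempotent and (P⊢𝒬)·Q_k = 0 for every k ∈ J; that is, the image of P⊢𝒬 is the part of Im P orthogonal to every Im Q_k. -/
open Matrix BigOperators

open scoped Classical in
/-- The residual `P ⊢ 𝒬 := P − Σ_{j : λ_j ≠ 0} λ_j⁻¹ P Q_j P` is a symmetric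
idempotent and is orthogonal to every `Q_k`. -/
theorem residual_isSymmIdem_and_orthogonal
    {n : ℕ} {J : Type*} [Fintype J]
    (P : Matrix (Fin n) (Fin n) ℝ) (hPsym : Pᵀ = P) (hPidem : P * P = P)
    (Q : J → Matrix (Fin n) (Fin n) ℝ)
    (hQsym : ∀ j, (Q j)ᵀ = Q j) (hQidem : ∀ j, Q j * Q j = Q j)
    (hQorth : ∀ j k, j ≠ k → Q j * Q k = 0)
    (lam : J → ℝ)
    (hbal : ∀ j, Q j * P * Q j = lam j • Q j)
    (hadj : ∀ j k, j ≠ k → Q j * P * Q k = 0) :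
    (P - ∑ j ∈ Finset.univ.filter (fun j => lam j ≠ 0),
        (lam j)⁻¹ • (P * Q j * P))ᵀ =
      P - ∑ j ∈ Finset.univ.filter (fun j => lam j ≠ 0),
        (lam j)⁻¹ • (P * Q j * P) ∧
    (P - ∑ j ∈ Finset.univ.filter (fun j => lam j ≠ 0),
        (lam j)⁻¹ • (P * Q j * P)) *
      (P - ∑ j ∈ Finset.univ.filter (fun j => lam j ≠ 0),
        (lam j)⁻¹ • (P * Q j * P)) =
      P - ∑ j ∈ Finset.univ.filter (fun j => lam j ≠ 0),
        (lam j)⁻¹ • (P * Q j * P) ∧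
    ∀ k, (P - ∑ j ∈ Finset.univ.filter (fun j => lam j ≠ 0),
        (lam j)⁻¹ • (P * Q j * P)) * Q k = 0 := by
  set F := Finset.univ.filter (fun j => lam j ≠ 0) with hF
  set S := ∑ j ∈ F, (lam j)⁻¹ • (P * Q j * P) with hS
  -- λ_k = 0 implies P * Q k = 0
  have hPQ0 : ∀ k, lam k = 0 → P * Q k = 0 := by
    intro k hk
    have h1 : (P * Q k)ᴴ * (P * Q k) = 0 := by
      have : (P * Q k)ᴴ = Q k * P := by
        simp [conjTranspose_mul, conjTranspose_eq_transpose_of_trivial, hPsym, hQsym]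
      rw [this]
      calc Q k * P * (P * Q k) = Q k * (P * P) * Q k := by simp only [mul_assoc]
        _ = Q k * P * Q k := by rw [hPidem]
        _ = 0 := by rw [hbal, hk, zero_smul]
    exact Matrix.conjTranspose_mul_self_eq_zero.mp h1
  have hPS : P * S = S := by
    rw [hS, Finset.mul_sum]
    refine Finset.sum_congr rfl fun j _ => ?_
    rw [mul_smul_comm]
    congr 1
    calc P * (P * Q j * P) = (P * P) * Q j * P := by simp only [mul_assoc]
      _ = P * Q j * P := by rw [hPidem]
  have hSP : S * P = S := by
    rw [hS, Finset.sum_mul]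
    refine Finset.sum_congr rfl fun j _ => ?_
    rw [smul_mul_assoc]
    congr 1
    calc P * Q j * P * P = P * Q j * (P * P) := by simp only [mul_assoc]
      _ = P * Q j * P := by rw [hPidem]
  have hterm : ∀ j k, (P * Q j * P) * (P * Q k * P) = P * (Q j * P * Q k) * P := by
    intro j k
    calc (P * Q j * P) * (P * Q k * P) = P * Q j * (P * P) * Q k * P := by simp only [mul_assoc]
      _ = P * (Q j * P * Q k) * P := by rw [hPidem]; simp only [mul_assoc]
  have hSS : S * S = S := by
    rw [hS, Finset.sum_mul_sum]
    rw [show ∑ j ∈ F, (lam j)⁻¹ • (P * Q j * P) = ∑ j ∈ F,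
      ∑ k ∈ F, if k = j then (lam j)⁻¹ • (P * Q j * P) else 0 from by
        simp [Finset.sum_ite_eq]]
    refine Finset.sum_congr rfl fun j hj => Finset.sum_congr rfl fun k hk => ?_
    have hjne : lam j ≠ 0 := (Finset.mem_filter.mp hj).2
    by_cases hjk : k = j
    · subst hjk
      simp only [if_pos rfl]
      rw [smul_mul_smul_comm, hterm, hbal]
      rw [show P * (lam k • Q k) * P = lam k • (P * Q k * P) from by
        rw [mul_smul_comm, smul_mul_assoc]]
      rw [smul_smul, if_pos trivial]
      congr 1
      field_simp
    · simp only [if_neg hjk]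
      rw [smul_mul_smul_comm, hterm, hadj j k (fun h => hjk h.symm), mul_zero, zero_mul,
        smul_zero]
  refine ⟨?_, ?_, ?_⟩
  · rw [transpose_sub, hPsym]
    congr 1
    rw [transpose_sum]
    refine Finset.sum_congr rfl fun j _ => ?_
    rw [transpose_smul, transpose_mul, transpose_mul, hPsym, hQsym, mul_assoc]
  · rw [sub_mul, mul_sub, mul_sub, hPidem, hPS, hSP, hSS]
    abel
  · intro k
    rw [sub_mul, hS, Finset.sum_mul]
    by_cases hk : lam k = 0
    · have : ∀ j ∈ F, ((lam j)⁻¹ • (P * Q j * P)) * Q k = 0 := by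
        intro j hj
        have hjk : j ≠ k := fun h => (Finset.mem_filter.mp hj).2 (h ▸ hk)
        rw [smul_mul_assoc, show P * Q j * P * Q k = P * (Q j * P * Q k) from by simp only [mul_assoc],
          hadj j k hjk, mul_zero, smul_zero]
      rw [Finset.sum_congr rfl this, Finset.sum_const_zero, hPQ0 k hk, sub_zero]
    · have hkF : k ∈ F := Finset.mem_filter.mpr ⟨Finset.mem_univ k, hk⟩
      have : ∀ j ∈ F, ((lam j)⁻¹ • (P * Q j * P)) * Q k
          = if j = k then P * Q k else 0 := by
        intro j hj
        by_cases hjk : j = k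
        · subst hjk
          rw [if_pos rfl, smul_mul_assoc, show P * Q j * P * Q j = P * (Q j * P * Q j) from by simp only [mul_assoc], hbal, mul_smul_comm, smul_smul, inv_mul_cancel₀ hk, one_smul]
        · rw [if_neg hjk, smul_mul_assoc, show P * Q j * P * Q k = P * (Q j * P * Q k) from by simp only [mul_assoc], hadj j k hjk, mul_zero, smul_zero]
      rw [Finset.sum_congr rfl this, Finset.sum_ite_eq' F k (fun _ => P * Q k), if_pos hkF,
        sub_self]
end

section
/- Let (P_i)_{i∈I} be a finite mutually orthogonal family of n×n real symmetric idempotents with Σ_{i∈I} P_i = I (the identity matrix), and let (Q_j)_{j∈J} be a finite mutually orthogonal family of n×n real symmetric idempotents that is structure balanced in relation to each P_i with efficiency factors (λ_{ij}). Then the collection consisting of all pertaining projectors P_i▷Q_j := λ_{ij}⁻¹·P_i·Q_j·P_i (over pairs (i,j) with λ_{ij} ≠ 0) together with all residuals P_i⊢𝒬 := P_i − Σ_{j : λ_{ij} ≠ 0} P_i▷Q_j (over i ∈ I) is a family of symmetric idempotents which are pairwise orthogonal (the product of any two distinct members is 0) and which sum to the identity matrix I. -/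
open Matrix BigOperators

open scoped Classical in
/-- Definition 4 / combined decomposition `𝒫 ▷ 𝒬`: the pertaining projectors
`P_i ▷ Q_j = λ_{ij}⁻¹ P_i Q_j P_i` (over pairs with `λ_{ij} ≠ 0`) together with
the residuals `P_i ⊢ 𝒬` form a family of pairwise orthogonal symmetric
idempotents summing to the identity. -/
theorem combined_decomposition_is_orthogonal_decomposition
    {n : ℕ} {I J : Type*} [Fintype I] [Fintype J]
    (P : I → Matrix (Fin n) (Fin n) ℝ)
    (hPsym : ∀ i, (P i)ᵀ = P i) (hPidem : ∀ i, P i * P i = P i)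
    (hPorth : ∀ i i', i ≠ i' → P i * P i' = 0)
    (hPsum : ∑ i, P i = 1)
    (Q : J → Matrix (Fin n) (Fin n) ℝ)
    (hQsym : ∀ j, (Q j)ᵀ = Q j) (hQidem : ∀ j, Q j * Q j = Q j)
    (hQorth : ∀ j k, j ≠ k → Q j * Q k = 0)
    (lam : I → J → ℝ)
    (hbal : ∀ i j, Q j * P i * Q j = lam i j • Q j)
    (hadj : ∀ i j k, j ≠ k → Q j * P i * Q k = 0)
    (D : {p : I × J // lam p.1 p.2 ≠ 0} ⊕ I → Matrix (Fin n) (Fin n) ℝ)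
    (hDpert : ∀ p : {p : I × J // lam p.1 p.2 ≠ 0},
      D (Sum.inl p) = (lam p.1.1 p.1.2)⁻¹ • (P p.1.1 * Q p.1.2 * P p.1.1))
    (hDres : ∀ i, D (Sum.inr i) =
      P i - ∑ j ∈ Finset.univ.filter (fun j => lam i j ≠ 0),
        (lam i j)⁻¹ • (P i * Q j * P i)) :
    (∀ x, (D x)ᵀ = D x ∧ D x * D x = D x) ∧
      (∀ x y, x ≠ y → D x * D y = 0) ∧
      ∑ x, D x = 1 := by
  classical
  set E : I → J → Matrix (Fin n) (Fin n) ℝ :=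
    fun i j => (lam i j)⁻¹ • (P i * Q j * P i) with hE
  -- basic products of the A matrices
  have hAmul : ∀ i j k, (P i * Q j * P i) * (P i * Q k * P i)
      = if j = k then lam i j • (P i * Q j * P i) else 0 := by
    intro i j k
    have h1 : (P i * Q j * P i) * (P i * Q k * P i)
        = P i * (Q j * (P i * P i) * Q k) * P i := by
      simp only [mul_assoc]
    rw [hPidem i] at h1
    by_cases hjk : j = k
    · subst hjk
      rw [if_pos rfl, h1, hbal i j, mul_smul_comm, smul_mul_assoc]
    · rw [if_neg hjk, h1, hadj i j k hjk]
      simp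
  have hAcross : ∀ i i', i ≠ i' → ∀ j k,
      (P i * Q j * P i) * (P i' * Q k * P i') = 0 := by
    intro i i' hii j k
    have h1 : (P i * Q j * P i) * (P i' * Q k * P i')
        = P i * (Q j * (P i * P i') * Q k) * P i' := by
      simp only [mul_assoc]
    rw [hPorth i i' hii] at h1
    simpa using h1
  have hEzero : ∀ i j, lam i j = 0 → E i j = 0 := by
    intro i j h; simp [hE, h]
  have hEsym : ∀ i j, (E i j)ᵀ = E i j := by
    intro i j
    simp [hE, transpose_smul, transpose_mul, hPsym, hQsym, mul_assoc]
  have hEidem : ∀ i j, E i j * E i j = E i j := by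
    intro i j
    by_cases h : lam i j = 0
    · simp [hEzero i j h]
    · simp only [hE]
      rw [smul_mul_assoc, mul_smul_comm, hAmul i j j, if_pos rfl, smul_smul, smul_smul]
      congr 1
      field_simp
  have hEEne : ∀ i j k, j ≠ k → E i j * E i k = 0 := by
    intro i j k hjk
    simp only [hE]
    rw [smul_mul_assoc, mul_smul_comm, hAmul i j k, if_neg hjk]
    simp
  have hEcross : ∀ i i', i ≠ i' → ∀ j k, E i j * E i' k = 0 := by
    intro i i' hii j k
    simp only [hE]
    rw [smul_mul_assoc, mul_smul_comm, hAcross i i' hii j k]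
    simp
  have hPE : ∀ i j, P i * E i j = E i j := by
    intro i j
    simp only [hE, mul_smul_comm]
    rw [show P i * (P i * Q j * P i) = (P i * P i) * Q j * P i by simp only [mul_assoc],
      hPidem]
  have hEP : ∀ i j, E i j * P i = E i j := by
    intro i j
    simp only [hE, smul_mul_assoc]
    rw [mul_assoc, hPidem]
  have hPEcross : ∀ i i', i ≠ i' → ∀ j, P i * E i' j = 0 := by
    intro i i' hii j
    simp only [hE, mul_smul_comm]
    rw [show P i * (P i' * Q j * P i') = (P i * P i') * Q j * P i' by simp only [mul_assoc],
      hPorth i i' hii]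
    simp
  have hEPcross : ∀ i i', i ≠ i' → ∀ j, E i j * P i' = 0 := by
    intro i i' hii j
    simp only [hE, smul_mul_assoc]
    rw [mul_assoc, mul_assoc, hPorth i i' hii]
    simp
  -- the inner sums
  set S : I → Matrix (Fin n) (Fin n) ℝ :=
    fun i => ∑ j ∈ Finset.univ.filter (fun j => lam i j ≠ 0), E i j with hS
  have hDres' : ∀ i, D (Sum.inr i) = P i - S i := fun i => hDres i
  have hDpert' : ∀ p : {p : I × J // lam p.1 p.2 ≠ 0},
      D (Sum.inl p) = E p.1.1 p.1.2 := fun p => hDpert p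
  have hPS : ∀ i, P i * S i = S i := by
    intro i
    rw [hS, Finset.mul_sum]
    exact Finset.sum_congr rfl fun j _ => hPE i j
  have hSP : ∀ i, S i * P i = S i := by
    intro i
    rw [hS, Finset.sum_mul]
    exact Finset.sum_congr rfl fun j _ => hEP i j
  have hES : ∀ i j, lam i j ≠ 0 → E i j * S i = E i j := by
    intro i j hj
    rw [hS, Finset.mul_sum]
    rw [Finset.sum_eq_single j (fun k _ hkj => hEEne i j k (Ne.symm hkj))
      (fun h => absurd (Finset.mem_filter.mpr ⟨Finset.mem_univ j, hj⟩) h)]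
    exact hEidem i j
  have hSE : ∀ i j, lam i j ≠ 0 → S i * E i j = E i j := by
    intro i j hj
    rw [hS, Finset.sum_mul]
    rw [Finset.sum_eq_single j (fun k _ hkj => hEEne i k j hkj)
      (fun h => absurd (Finset.mem_filter.mpr ⟨Finset.mem_univ j, hj⟩) h)]
    exact hEidem i j
  have hSS : ∀ i, S i * S i = S i := by
    intro i
    conv_lhs => rw [hS, Finset.sum_mul]
    refine Finset.sum_congr rfl fun j hj => ?_
    exact hES i j (Finset.mem_filter.mp hj).2
  have hSEcross : ∀ i i', i ≠ i' → ∀ j, S i * E i' j = 0 := by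
    intro i i' hii j
    rw [hS, Finset.sum_mul]
    exact Finset.sum_eq_zero fun k _ => hEcross i i' hii k j
  have hEScross : ∀ i i', i ≠ i' → ∀ j, E i j * S i' = 0 := by
    intro i i' hii j
    rw [hS, Finset.mul_sum]
    exact Finset.sum_eq_zero fun k _ => hEcross i i' hii j k
  have hPScross : ∀ i i', i ≠ i' → P i * S i' = 0 := by
    intro i i' hii
    rw [hS, Finset.mul_sum]
    exact Finset.sum_eq_zero fun k _ => hPEcross i i' hii k
  have hSPcross : ∀ i i', i ≠ i' → S i * P i' = 0 := by
    intro i i' hii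
    rw [hS, Finset.sum_mul]
    exact Finset.sum_eq_zero fun k _ => hEPcross i i' hii k
  have hSScross : ∀ i i', i ≠ i' → S i * S i' = 0 := by
    intro i i' hii
    rw [hS, Finset.sum_mul]
    exact Finset.sum_eq_zero fun k _ => hEScross i i' hii k
  refine ⟨?_, ?_, ?_⟩
  · -- symmetry and idempotence
    rintro (p | i)
    · rw [hDpert' p]
      exact ⟨hEsym _ _, hEidem _ _⟩
    · rw [hDres' i]
      constructor
      · rw [transpose_sub, hPsym, hS, transpose_sum]
        congr 1
        exact Finset.sum_congr rfl fun j _ => hEsym i j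
      · rw [sub_mul, mul_sub, mul_sub, hPidem, hPS, hSP, hSS]
        abel
  · -- orthogonality
    rintro (p | i) (q | i') hxy
    · rw [hDpert' p, hDpert' q]
      obtain ⟨⟨i, j⟩, hp⟩ := p
      obtain ⟨⟨i', k⟩, hq⟩ := q
      by_cases hii : i = i'
      · subst hii
        have hjk : j ≠ k := by
          intro h; subst h; exact hxy rfl
        exact hEEne i j k hjk
      · exact hEcross i i' hii j k
    · rw [hDpert' p, hDres' i']
      obtain ⟨⟨i, j⟩, hp⟩ := p
      by_cases hii : i = i'
      · subst hii
        rw [mul_sub, hEP, hES i j hp, sub_self]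
      · rw [mul_sub, hEPcross i i' hii, hEScross i i' hii, sub_self]
    · rw [hDres' i, hDpert' q]
      obtain ⟨⟨i', j⟩, hq⟩ := q
      by_cases hii : i = i'
      · subst hii
        rw [sub_mul, hPE, hSE i j hq, sub_self]
      · rw [sub_mul, hPEcross i i' hii, hSEcross i i' hii, sub_self]
    · have hii : i ≠ i' := by
        intro h; subst h; exact hxy rfl
      rw [hDres' i, hDres' i', sub_mul, mul_sub, mul_sub,
        hPorth i i' hii, hPScross i i' hii, hSPcross i i' hii, hSScross i i' hii]
      simp
  · -- sum to identity
    rw [Fintype.sum_sum_type]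
    have h1 : (∑ p : {p : I × J // lam p.1 p.2 ≠ 0}, D (Sum.inl p))
        = ∑ i, S i := by
      calc (∑ p : {p : I × J // lam p.1 p.2 ≠ 0}, D (Sum.inl p))
          = ∑ p : {p : I × J // lam p.1 p.2 ≠ 0}, E p.1.1 p.1.2 :=
            Finset.sum_congr rfl fun p _ => hDpert' p
        _ = ∑ p ∈ Finset.univ.filter (fun p : I × J => lam p.1 p.2 ≠ 0),
              E p.1 p.2 := by
              exact (Finset.sum_subtype
                (Finset.univ.filter (fun p : I × J => lam p.1 p.2 ≠ 0))
                (by simp) (fun p : I × J => E p.1 p.2)).symm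
        _ = ∑ p : I × J, E p.1 p.2 := by
            refine Finset.sum_filter_of_ne ?_
            intro p _ hne
            by_contra h
            exact hne (hEzero p.1 p.2 h)
        _ = ∑ i, ∑ j, E i j := Fintype.sum_prod_type _
        _ = ∑ i, S i := by
            refine Finset.sum_congr rfl fun i _ => ?_
            rw [hS]
            refine (Finset.sum_filter_of_ne ?_).symm
            intro j _ hne
            by_contra h
            exact hne (hEzero i j h)
    rw [h1]
    have h2 : (∑ i, D (Sum.inr i)) = ∑ i, (P i - S i) :=
      Finset.sum_congr rfl fun i _ => hDres' i
    rw [h2, ← Finset.sum_add_distrib]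
    simp only [add_sub_cancel]
    exact hPsum
end

section
/- Let (P_i)_{i∈I} and (Q_j)_{j∈J} be finite mutually orthogonal families of n×n real symmetric idempotents with Σ_{i∈I} P_i = I and Σ_{j∈J} Q_j = I (the identity matrix), such that (Q_j) is structure balanced in relation to each P_i with efficiency factors (λ_{ij}). Then for each i ∈ I, P_i = Σ_{j : λ_{ij} ≠ 0} Q_j; that is, the family (Q_j) is a refinement of (P_i): each subspace Im P_i is the direct sum of those subspaces Im Q_j with λ_{ij} ≠ 0. -/
open Matrix BigOperators

open scoped Classical in
/-- Lemma 4.2 (refinement): if both structures decompose the whole space, then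
each `P_i` is the sum of those `Q_j` with `λ_{ij} ≠ 0`, i.e. the family `(Q_j)`
refines the family `(P_i)`. -/
theorem refinement_of_both_sum_to_identity
    {n : ℕ} {I J : Type*} [Fintype I] [Fintype J]
    (P : I → Matrix (Fin n) (Fin n) ℝ)
    (hPsym : ∀ i, (P i)ᵀ = P i) (hPidem : ∀ i, P i * P i = P i)
    (hPorth : ∀ i i', i ≠ i' → P i * P i' = 0)
    (hPsum : ∑ i, P i = 1)
    (Q : J → Matrix (Fin n) (Fin n) ℝ)
    (hQsym : ∀ j, (Q j)ᵀ = Q j) (hQidem : ∀ j, Q j * Q j = Q j)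
    (hQorth : ∀ j k, j ≠ k → Q j * Q k = 0)
    (hQsum : ∑ j, Q j = 1)
    (lam : I → J → ℝ)
    (hbal : ∀ i j, Q j * P i * Q j = lam i j • Q j)
    (hadj : ∀ i j k, j ≠ k → Q j * P i * Q k = 0) :
    ∀ i, P i = ∑ j ∈ Finset.univ.filter (fun j => lam i j ≠ 0), Q j := by

  intro i
  have key : P i = ∑ j, lam i j • Q j := by
    calc P i = (∑ j, Q j) * P i * (∑ k, Q k) := by rw [hQsum]; simp
    _ = ∑ j, ∑ k, Q j * P i * Q k := by
        rw [Finset.sum_mul, Finset.sum_mul]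
        refine Finset.sum_congr rfl fun j _ => ?_
        rw [Finset.mul_sum]
    _ = ∑ j, lam i j • Q j := by
        refine Finset.sum_congr rfl fun j _ => ?_
        rw [Finset.sum_eq_single j (fun k _ hk => hadj i j k (Ne.symm hk)) (by simp),
          hbal]
  have hPQ : ∀ j, P i * Q j = lam i j • Q j := by
    intro j
    rw [key, Finset.sum_mul, Finset.sum_eq_single j
      (fun k _ hk => by rw [smul_mul_assoc, hQorth k j hk, smul_zero]) (by simp),
      smul_mul_assoc, hQidem]
  have hsq : ∀ j, lam i j • Q j = lam i j • (lam i j • Q j) := by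
    intro j
    calc lam i j • Q j = P i * Q j := (hPQ j).symm
    _ = P i * (P i * Q j) := by rw [← mul_assoc, hPidem]
    _ = P i * (lam i j • Q j) := by rw [hPQ]
    _ = lam i j • (P i * Q j) := (mul_smul_comm _ _ _)
    _ = lam i j • (lam i j • Q j) := by rw [hPQ]
  rw [key, ← Finset.sum_filter_add_sum_filter_not Finset.univ (fun j => lam i j ≠ 0)]
  have h2 : ∑ j ∈ Finset.univ.filter (fun j => ¬ lam i j ≠ 0), lam i j • Q j = 0 := by
    refine Finset.sum_eq_zero fun j hj => ?_
    simp only [Finset.mem_filter, not_not] at hj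
    rw [hj.2, zero_smul]
  rw [h2, add_zero]
  refine Finset.sum_congr rfl fun j hj => ?_
  simp only [Finset.mem_filter] at hj
  have := hsq j
  have hc : Q j = lam i j • Q j := by
    have h := smul_right_injective (Matrix (Fin n) (Fin n) ℝ) hj.2
    exact h this
  exact hc.symm
end

section
/- Let P be an n×n real symmetric idempotent matrix; let (Q_j)_{j∈J} be a finite mutually orthogonal family of n×n real symmetric idempotents with I_Q := Σ_{j∈J} Q_j, structure balanced in relation to P with efficiency factors (λ_j)_{j∈J}; and let (R_m)_{m∈M} be a finite mutually orthogonal family of n×n real symmetric idempotents with R_m·I_Q = R_m for all m, such that (R_m) is structure balanced in relation to each Q_j with efficiency factors (μ_{jm}), i.e. R_m·Q_j·R_m = μ_{jm}·R_m for all j, m and R_m·Q_j·R_n = 0 whenever m ≠ n. Then (R_m) is structure balanced in relation to P with efficiency factors given by the matrix product: R_m·P·R_m = (Σ_{j∈J} λ_j·μ_{jm})·R_m for all m ∈ M, and R_m·P·R_n = 0 whenever m ≠ n. -/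
open Matrix BigOperators

/-- Theorem 5.1(a): for a chain of randomizations, `(R_m)` is structure balanced
in relation to `P` with efficiency matrix `Λ_{PR} = Λ_{PQ} Λ_{QR}`. -/
theorem composite_structure_balance
    {n : ℕ} {J M : Type*} [Fintype J] [Fintype M]
    (P : Matrix (Fin n) (Fin n) ℝ) (hPsym : Pᵀ = P) (hPidem : P * P = P)
    (Q : J → Matrix (Fin n) (Fin n) ℝ)
    (hQsym : ∀ j, (Q j)ᵀ = Q j) (hQidem : ∀ j, Q j * Q j = Q j)
    (hQorth : ∀ j k, j ≠ k → Q j * Q k = 0)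
    (lam : J → ℝ)
    (hbalQ : ∀ j, Q j * P * Q j = lam j • Q j)
    (hadjQ : ∀ j k, j ≠ k → Q j * P * Q k = 0)
    (R : M → Matrix (Fin n) (Fin n) ℝ)
    (hRsym : ∀ m, (R m)ᵀ = R m) (hRidem : ∀ m, R m * R m = R m)
    (hRorth : ∀ m m', m ≠ m' → R m * R m' = 0)
    (hRsub : ∀ m, R m * (∑ j, Q j) = R m)
    (mu : J → M → ℝ)
    (hbalR : ∀ j m, R m * Q j * R m = mu j m • R m)
    (hadjR : ∀ j m m', m ≠ m' → R m * Q j * R m' = 0) :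
    (∀ m, R m * P * R m = (∑ j, lam j * mu j m) • R m) ∧
      (∀ m m', m ≠ m' → R m * P * R m' = 0) := by
  have hIQ : ∀ m, (∑ j, Q j) * R m = R m := by
    intro m
    have h := congrArg Matrix.transpose (hRsub m)
    simpa [Matrix.transpose_mul, Matrix.transpose_sum, hQsym, hRsym] using h
  have key : ∀ m m', R m * P * R m' = ∑ j, lam j • (R m * Q j * R m') := by
    intro m m'
    have h1 : R m * P * R m' = (R m * (∑ j, Q j)) * P * ((∑ j, Q j) * R m') := by
      rw [hRsub, hIQ]
    rw [h1]
    simp only [Finset.mul_sum, Finset.sum_mul]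
    refine Finset.sum_congr rfl (fun j _ => ?_)
    rw [Finset.sum_eq_single j]
    · have : R m * Q j * P * (Q j * R m') = R m * (Q j * P * Q j) * R m' := by
        noncomm_ring
      rw [this, hbalQ, Matrix.mul_smul, Matrix.smul_mul]
    · intro k _ hk
      have : R m * Q k * P * (Q j * R m') = R m * (Q k * P * Q j) * R m' := by
        noncomm_ring
      rw [this, hadjQ k j hk]
      simp
    · intro h; exact absurd (Finset.mem_univ j) h
  constructor
  · intro m
    rw [key m m]
    rw [Finset.sum_congr rfl (fun j _ => by rw [hbalR j m, smul_smul])]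
    rw [← Finset.sum_smul]
  · intro m m' hmm
    rw [key m m']
    rw [Finset.sum_congr rfl (fun j _ => by rw [hadjR j m m' hmm, smul_zero])]
    simp
end

section
/- Let P be an n×n real symmetric idempotent matrix; let (Q_j)_{j∈J} be a finite mutually orthogonal family of n×n real symmetric idempotents with I_Q := Σ_{j∈J} Q_j, structure balanced in relation to P with efficiency factors (λ_j)_{j∈J}; fix k ∈ J with λ_k ≠ 0 and set P▷Q_k := λ_k⁻¹·P·Q_k·P. Let R be an n×n real symmetric idempotent with R·I_Q = R and R·Q_k·R = μ·R for some real μ. Then R·(P▷Q_k)·R = λ_k·μ·R. -/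
open Matrix BigOperators

/-- Condition (i) of Theorem 5.1(b): `R` is first-order balanced in relation to
the pertaining projector `P ▷ Q_k = λ_k⁻¹ P Q_k P` with efficiency factor
`λ_k μ`. -/
theorem first_order_balance_wrt_pertaining_projector
    {n : ℕ} {J : Type*} [Fintype J]
    (P : Matrix (Fin n) (Fin n) ℝ) (hPsym : Pᵀ = P) (hPidem : P * P = P)
    (Q : J → Matrix (Fin n) (Fin n) ℝ)
    (hQsym : ∀ j, (Q j)ᵀ = Q j) (hQidem : ∀ j, Q j * Q j = Q j)
    (hQorth : ∀ j k, j ≠ k → Q j * Q k = 0)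
    (lam : J → ℝ)
    (hbalQ : ∀ j, Q j * P * Q j = lam j • Q j)
    (hadjQ : ∀ j k, j ≠ k → Q j * P * Q k = 0)
    (k : J) (hk : lam k ≠ 0)
    (R : Matrix (Fin n) (Fin n) ℝ) (hRsym : Rᵀ = R) (hRidem : R * R = R)
    (hRsub : R * (∑ j, Q j) = R)
    (mu : ℝ) (hbalR : R * Q k * R = mu • R) :
    R * ((lam k)⁻¹ • (P * Q k * P)) * R = (lam k * mu) • R := by
  set S : Matrix (Fin n) (Fin n) ℝ := ∑ j, Q j with hS
  have hQR : S * R = R := by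
    have := congrArg Matrix.transpose hRsub
    simpa [Matrix.transpose_mul, Matrix.transpose_sum, hQsym, hRsym, hS] using this
  have h1 : S * (P * Q k) = lam k • Q k := by
    rw [hS, Finset.sum_mul]
    rw [Finset.sum_eq_single k]
    · rw [← mul_assoc]; exact hbalQ k
    · intro j _ hj; rw [← mul_assoc]; exact hadjQ j k hj
    · simp
  have h2 : Q k * P * S = lam k • Q k := by
    rw [hS, Finset.mul_sum]
    rw [Finset.sum_eq_single k]
    · exact hbalQ k
    · intro j _ hj; exact hadjQ k j (Ne.symm hj)
    · simp
  have key : R * (P * Q k * P) * R = (lam k * lam k * mu) • R := by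
    calc R * (P * Q k * P) * R
        = (R * S) * (P * Q k * P) * (S * R) := by rw [hRsub, hQR]
      _ = R * (S * (P * Q k) * (P * S)) * R := by
          simp only [mul_assoc]
      _ = R * ((lam k • Q k) * (P * S)) * R := by rw [h1]
      _ = lam k • (R * (Q k * P * S) * R) := by
          simp only [Matrix.smul_mul, Matrix.mul_smul, mul_assoc]
      _ = lam k • (R * (lam k • Q k) * R) := by rw [h2]
      _ = (lam k * lam k) • (R * Q k * R) := by
          simp only [Matrix.smul_mul, Matrix.mul_smul, smul_smul]
      _ = (lam k * lam k * mu) • R := by rw [hbalR, smul_smul]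
  calc R * ((lam k)⁻¹ • (P * Q k * P)) * R
      = (lam k)⁻¹ • (R * (P * Q k * P) * R) := by
        simp only [Matrix.smul_mul, Matrix.mul_smul]
    _ = (lam k * mu) • R := by
        rw [key, smul_smul]
        congr 1
        field_simp
end

section
/- Let P be an n×n real symmetric idempotent matrix; let (Q_j)_{j∈J} be a finite mutually orthogonal family of n×n real symmetric idempotents with I_Q := Σ_{j∈J} Q_j, structure balanced in relation to P with efficiency factors (λ_j)_{j∈J}; and let (R_m)_{m∈M} be a finite mutually orthogonal family of n×n real symmetric idempotents with R_m·I_Q = R_m for all m, structure balanced in relation to each Q_j with efficiency factors (μ_{jm}). For k ∈ J with λ_k ≠ 0 set P▷Q_k := λ_k⁻¹·P·Q_k·P, and set P⊢𝒬 := P − Σ_{j : λ_j ≠ 0} P▷Q_j. Then: (ii) R_m·(P▷Q_k)·R_n = 0 whenever m ≠ n; and (iii) R_m·(P⊢𝒬)·R_n = 0 for all m, n ∈ M (including m = n). -/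
open Matrix BigOperators

open scoped Classical in
/-- Conditions (ii) and (iii) in the proof of Theorem 5.1(b): the family `(R_m)`
satisfies adjusted orthogonality with respect to each pertaining projector
`P ▷ Q_k`, and has efficiency factor 0 on the residual `P ⊢ 𝒬`. -/
theorem structure_balance_wrt_combined_decomposition
    {n : ℕ} {J M : Type*} [Fintype J] [Fintype M]
    (P : Matrix (Fin n) (Fin n) ℝ) (hPsym : Pᵀ = P) (hPidem : P * P = P)
    (Q : J → Matrix (Fin n) (Fin n) ℝ)
    (hQsym : ∀ j, (Q j)ᵀ = Q j) (hQidem : ∀ j, Q j * Q j = Q j)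
    (hQorth : ∀ j k, j ≠ k → Q j * Q k = 0)
    (lam : J → ℝ)
    (hbalQ : ∀ j, Q j * P * Q j = lam j • Q j)
    (hadjQ : ∀ j k, j ≠ k → Q j * P * Q k = 0)
    (R : M → Matrix (Fin n) (Fin n) ℝ)
    (hRsym : ∀ m, (R m)ᵀ = R m) (hRidem : ∀ m, R m * R m = R m)
    (hRorth : ∀ m m', m ≠ m' → R m * R m' = 0)
    (hRsub : ∀ m, R m * (∑ j, Q j) = R m)
    (mu : J → M → ℝ)
    (hbalR : ∀ j m, R m * Q j * R m = mu j m • R m)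
    (hadjR : ∀ j m m', m ≠ m' → R m * Q j * R m' = 0) :
    (∀ k, lam k ≠ 0 → ∀ m m', m ≠ m' →
        R m * ((lam k)⁻¹ • (P * Q k * P)) * R m' = 0) ∧
      (∀ m m', R m *
          (P - ∑ j ∈ Finset.univ.filter (fun j => lam j ≠ 0),
            (lam j)⁻¹ • (P * Q j * P)) * R m' = 0) := by
  set S : Matrix (Fin n) (Fin n) ℝ := ∑ j, Q j with hS
  have hsubL : ∀ m, S * R m = R m := by
    intro m
    have := congrArg Matrix.transpose (hRsub m)
    simpa [Matrix.transpose_mul, Matrix.transpose_sum, hQsym, hRsym, hS] using this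
  have hA : ∀ k, S * P * Q k = lam k • Q k := by
    intro k
    rw [hS, Finset.sum_mul, Finset.sum_mul]
    rw [Finset.sum_eq_single k (fun j _ hj => hadjQ j k hj) (by simp)]
    exact hbalQ k
  have hB : ∀ k, Q k * P * S = lam k • Q k := by
    intro k
    rw [hS, Finset.mul_sum]
    rw [Finset.sum_eq_single k (fun j _ hj => hadjQ k j hj.symm) (by simp)]
    exact hbalQ k
  have h1 : ∀ k m, R m * P * Q k = lam k • (R m * Q k) := by
    intro k m
    calc R m * P * Q k = (R m * S) * P * Q k := by rw [hRsub m]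
      _ = R m * (S * P * Q k) := by simp only [mul_assoc]
      _ = lam k • (R m * Q k) := by rw [hA k, Matrix.mul_smul]
  have h2 : ∀ k m, Q k * P * R m = lam k • (Q k * R m) := by
    intro k m
    calc Q k * P * R m = (Q k * P * S) * R m := by
          rw [mul_assoc (Q k * P) S (R m), hsubL m]
      _ = lam k • (Q k * R m) := by rw [hB k, Matrix.smul_mul]
  have key : ∀ k m m', R m * (P * Q k * P) * R m'
      = (lam k * lam k) • (R m * Q k * R m') := by
    intro k m m'
    calc R m * (P * Q k * P) * R m'
        = (R m * P * Q k) * (P * R m') := by simp only [mul_assoc]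
      _ = lam k • (R m * Q k * (P * R m')) := by
          rw [h1 k m, Matrix.smul_mul]
      _ = lam k • (R m * (Q k * P * R m')) := by simp only [mul_assoc]
      _ = lam k • (R m * (lam k • (Q k * R m'))) := by rw [h2 k m']
      _ = (lam k * lam k) • (R m * Q k * R m') := by
          rw [Matrix.mul_smul, smul_smul, mul_assoc]
  constructor
  · intro k hk m m' hmm
    rw [Matrix.mul_smul, Matrix.smul_mul, key k m m',
      smul_smul]
    rw [hadjR k m m' hmm, smul_zero]
  · intro m m'
    have hP : R m * P * R m' = ∑ j, lam j • (R m * Q j * R m') := by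
      have hSPS : S * P * S = ∑ j, lam j • Q j := by
        rw [Finset.mul_sum]
        exact Finset.sum_congr rfl fun j _ => hA j
      calc R m * P * R m' = (R m * S) * P * (S * R m') := by
            rw [hRsub m, hsubL m']
        _ = R m * (S * P * S) * R m' := by simp only [mul_assoc]
        _ = ∑ j, lam j • (R m * Q j * R m') := by
            rw [hSPS, Finset.mul_sum, Finset.sum_mul]
            exact Finset.sum_congr rfl fun j _ => by
              rw [Matrix.mul_smul, Matrix.smul_mul]
    have hT : R m * (∑ j ∈ Finset.univ.filter (fun j => lam j ≠ 0),
          (lam j)⁻¹ • (P * Q j * P)) * R m'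
        = ∑ j ∈ Finset.univ.filter (fun j => lam j ≠ 0),
            lam j • (R m * Q j * R m') := by
      rw [Finset.mul_sum, Finset.sum_mul]
      refine Finset.sum_congr rfl fun j hj => ?_
      have hj0 : lam j ≠ 0 := (Finset.mem_filter.mp hj).2
      rw [Matrix.mul_smul, Matrix.smul_mul, key j m m', smul_smul]
      congr 1
      field_simp
    rw [mul_sub, sub_mul, hP, hT]
    rw [← Finset.sum_filter_add_sum_filter_not Finset.univ (fun j => lam j ≠ 0)
      (fun j => lam j • (R m * Q j * R m'))]
    rw [add_sub_cancel_left]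
    refine Finset.sum_eq_zero fun j hj => ?_
    have : lam j = 0 := not_not.mp (Finset.mem_filter.mp hj).2
    rw [this, zero_smul]
end

section
/- Let P be an n×n real symmetric idempotent matrix and let (Q_j)_{j∈J} be a finite mutually orthogonal family of n×n real symmetric idempotents, structure balanced in relation to P with efficiency factors (λ_j)_{j∈J}. Let M₁ and M₂ be n×n real symmetric idempotent matrices and j₁, j₂ ∈ J such that Q_{j₁}·M₁ = M₁ = M₁·Q_{j₁} and Q_{j₂}·M₂ = M₂ = M₂·Q_{j₂}. Then M₁·P·M₂ = 0 if j₁ ≠ j₂, and M₁·P·M₂ = λ_{j₁}·M₁·M₂ if j₁ = j₂; in particular, M₁·P·M₁ = λ_{j₁}·M₁. -/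
open Matrix BigOperators

/-- The computation proving Theorem 5.1(c): members `M₁, M₂` of a refinement of
the family `(Q_j)` satisfy `M₁ P M₂ = 0` if their parents differ, and
`M₁ P M₂ = λ_{j₁} M₁ M₂` if they share the parent `Q_{j₁}`; in particular
`M₁ P M₁ = λ_{j₁} M₁`. -/
theorem refinement_structure_balance
    {n : ℕ} {J : Type*} [Fintype J]
    (P : Matrix (Fin n) (Fin n) ℝ) (hPsym : Pᵀ = P) (hPidem : P * P = P)
    (Q : J → Matrix (Fin n) (Fin n) ℝ)
    (hQsym : ∀ j, (Q j)ᵀ = Q j) (hQidem : ∀ j, Q j * Q j = Q j)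
    (hQorth : ∀ j k, j ≠ k → Q j * Q k = 0)
    (lam : J → ℝ)
    (hbalQ : ∀ j, Q j * P * Q j = lam j • Q j)
    (hadjQ : ∀ j k, j ≠ k → Q j * P * Q k = 0)
    (M₁ M₂ : Matrix (Fin n) (Fin n) ℝ)
    (hM₁sym : M₁ᵀ = M₁) (hM₁idem : M₁ * M₁ = M₁)
    (hM₂sym : M₂ᵀ = M₂) (hM₂idem : M₂ * M₂ = M₂)
    (j₁ j₂ : J)
    (hM₁l : Q j₁ * M₁ = M₁) (hM₁r : M₁ * Q j₁ = M₁)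
    (hM₂l : Q j₂ * M₂ = M₂) (hM₂r : M₂ * Q j₂ = M₂) :
    (j₁ ≠ j₂ → M₁ * P * M₂ = 0) ∧
      (j₁ = j₂ → M₁ * P * M₂ = lam j₁ • (M₁ * M₂)) ∧
      M₁ * P * M₁ = lam j₁ • M₁ := by
  have key : M₁ * P * M₂ = M₁ * (Q j₁ * P * Q j₂) * M₂ := by
    rw [show M₁ * (Q j₁ * P * Q j₂) * M₂ = (M₁ * Q j₁) * P * (Q j₂ * M₂) by
      simp only [Matrix.mul_assoc], hM₁r, hM₂l]
  refine ⟨fun h => ?_, fun h => ?_, ?_⟩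
  · rw [key, hadjQ j₁ j₂ h]; simp
  · subst h
    rw [key, hbalQ j₁, Matrix.mul_smul, Matrix.smul_mul, hM₁r]
  · have key1 : M₁ * P * M₁ = M₁ * (Q j₁ * P * Q j₁) * M₁ := by
      rw [show M₁ * (Q j₁ * P * Q j₁) * M₁ = (M₁ * Q j₁) * P * (Q j₁ * M₁) by
        simp only [Matrix.mul_assoc], hM₁r, hM₁l]
    rw [key1, hbalQ j₁, Matrix.mul_smul, Matrix.smul_mul, hM₁r, hM₁idem]
end

section
/- Let P be an n×n real symmetric idempotent matrix; let (Q_j)_{j∈J} be a finite mutually orthogonal family of n×n real symmetric idempotents with I_Q := Σ_{j∈J} Q_j, structure balanced in relation to P with efficiency factors (λ_j)_{j∈J}; fix k ∈ J and let R be an n×n real symmetric idempotent with R·I_Q = R. Then P·Q_k·P·R·P·Q_k·P = λ_k²·P·Q_k·R·Q_k·P. Consequently, if λ_k ≠ 0 and R additionally satisfies R·Q_k·R = μ·R with μ ≠ 0, then (P▷Q_k)▷R := λ_k⁻¹·μ⁻¹·(P▷Q_k)·R·(P▷Q_k) equals P▷(Q_k▷R) := λ_k⁻¹·P·(μ⁻¹·Q_k·R·Q_k)·P,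 where P▷Q_k := λ_k⁻¹·P·Q_k·P. -/
open Matrix BigOperators

/-- Key identity in the proof of Theorem 5.1(d):
`P Q_k P R P Q_k P = λ_k² P Q_k R Q_k P`; consequently the pertaining
projectors associate, `(P ▷ Q_k) ▷ R = P ▷ (Q_k ▷ R)`. -/
theorem pertaining_projector_assoc
    {n : ℕ} {J : Type*} [Fintype J]
    (P : Matrix (Fin n) (Fin n) ℝ) (hPsym : Pᵀ = P) (hPidem : P * P = P)
    (Q : J → Matrix (Fin n) (Fin n) ℝ)
    (hQsym : ∀ j, (Q j)ᵀ = Q j) (hQidem : ∀ j, Q j * Q j = Q j)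
    (hQorth : ∀ j k, j ≠ k → Q j * Q k = 0)
    (lam : J → ℝ)
    (hbalQ : ∀ j, Q j * P * Q j = lam j • Q j)
    (hadjQ : ∀ j k, j ≠ k → Q j * P * Q k = 0)
    (k : J)
    (R : Matrix (Fin n) (Fin n) ℝ) (hRsym : Rᵀ = R) (hRidem : R * R = R)
    (hRsub : R * (∑ j, Q j) = R) :
    P * Q k * P * R * P * Q k * P = (lam k ^ 2) • (P * Q k * R * Q k * P) ∧
      ∀ mu : ℝ, lam k ≠ 0 → mu ≠ 0 → R * Q k * R = mu • R →
        (lam k)⁻¹ • (mu⁻¹ • (((lam k)⁻¹ • (P * Q k * P)) * R *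
            ((lam k)⁻¹ • (P * Q k * P)))) =
          (lam k)⁻¹ • (P * (mu⁻¹ • (Q k * R * Q k)) * P) := by
  -- R absorbed on the left: (∑ Q j) * R = R
  have hRsub' : (∑ j, Q j) * R = R := by
    have := congrArg Matrix.transpose hRsub
    simpa [Matrix.transpose_mul, Matrix.transpose_sum, hQsym, hRsym] using this
  -- Q k * P * R = lam k • (Q k * R)
  have h1 : Q k * P * R = lam k • (Q k * R) := by
    have : Q k * P * R = Q k * P * ((∑ j, Q j) * R) := by rw [hRsub']
    rw [this, ← Matrix.mul_assoc, Matrix.mul_sum]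
    have hsum : (∑ j, Q k * P * Q j) = lam k • Q k := by
      rw [Finset.sum_eq_single k]
      · exact hbalQ k
      · intro j _ hj; exact hadjQ k j (Ne.symm hj)
      · intro h; exact absurd (Finset.mem_univ k) h
    rw [hsum, Matrix.smul_mul]
  -- R * P * Q k = lam k • (R * Q k)
  have h2 : R * P * Q k = lam k • (R * Q k) := by
    have := congrArg Matrix.transpose h1
    simpa [Matrix.transpose_mul, Matrix.transpose_smul, hQsym, hPsym, hRsym,
      Matrix.mul_assoc] using this
  have key : P * Q k * P * R * P * Q k * P = (lam k ^ 2) • (P * Q k * R * Q k * P) := by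
    calc P * Q k * P * R * P * Q k * P
        = P * (Q k * P * R) * (P * Q k) * P := by
          simp only [Matrix.mul_assoc]
      _ = P * (lam k • (Q k * R)) * (P * Q k) * P := by rw [h1]
      _ = lam k • (P * Q k * (R * P * Q k) * P) := by
          simp only [Matrix.mul_smul, Matrix.smul_mul, Matrix.mul_assoc]
      _ = lam k • (P * Q k * (lam k • (R * Q k)) * P) := by rw [h2]
      _ = (lam k ^ 2) • (P * Q k * R * Q k * P) := by
          simp only [Matrix.mul_smul, Matrix.smul_mul, smul_smul, Matrix.mul_assoc]
          ring_nf
  refine ⟨key, ?_⟩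
  intro mu hlk hmu _
  have expand : ((lam k)⁻¹ • (P * Q k * P)) * R * ((lam k)⁻¹ • (P * Q k * P))
      = ((lam k)⁻¹ * (lam k)⁻¹) • (P * Q k * P * R * P * Q k * P) := by
    simp only [Matrix.smul_mul, Matrix.mul_smul, smul_smul, Matrix.mul_assoc]
  rw [expand, key, smul_smul, smul_smul, smul_smul]
  have hscal : (lam k)⁻¹ * mu⁻¹ * ((lam k)⁻¹ * (lam k)⁻¹) * lam k ^ 2
      = (lam k)⁻¹ * mu⁻¹ := by field_simp
  rw [hscal]
  simp only [Matrix.mul_smul, Matrix.smul_mul, Matrix.mul_assoc, smul_smul]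
end

section
/- Let P be an n×n real symmetric idempotent matrix; let (Q_j)_{j∈J} be a finite mutually orthogonal family of n×n real symmetric idempotents with I_Q := Σ_{j∈J} Q_j, structure balanced in relation to P with efficiency factors (λ_j)_{j∈J}; fix k ∈ J with λ_k ≠ 0 and set P▷Q_k := λ_k⁻¹·P·Q_k·P. Let (R_m)_{m∈M} be a finite mutually orthogonal family of n×n real symmetric idempotents with R_m·I_Q = R_m for all m, structure balanced in relation to each Q_j with efficiency factors (μ_{jm}). Then (P▷Q_k)⊢𝓡 = P▷(Q_k⊢𝓡); that is, (P▷Q_k) − Σ_{m : μ_{km} ≠ 0} λ_k⁻¹·μ_{km}⁻¹·(P▷Q_k)·R_m·(P▷Q_k) = λ_k⁻¹·P·(Q_k − Σ_{m : μ_{km} ≠ 0} μ_{km}⁻¹·Q_k·R_m·Q_k)·P. -/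
open Matrix BigOperators

open scoped Classical in
/-- Residual identity in the proof of Theorem 5.1(d):
`(P ▷ Q_k) ⊢ 𝓡 = P ▷ (Q_k ⊢ 𝓡)`. -/
theorem residual_of_pertaining_projector
    {n : ℕ} {J M : Type*} [Fintype J] [Fintype M]
    (P : Matrix (Fin n) (Fin n) ℝ) (hPsym : Pᵀ = P) (hPidem : P * P = P)
    (Q : J → Matrix (Fin n) (Fin n) ℝ)
    (hQsym : ∀ j, (Q j)ᵀ = Q j) (hQidem : ∀ j, Q j * Q j = Q j)
    (hQorth : ∀ j k, j ≠ k → Q j * Q k = 0)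
    (lam : J → ℝ)
    (hbalQ : ∀ j, Q j * P * Q j = lam j • Q j)
    (hadjQ : ∀ j k, j ≠ k → Q j * P * Q k = 0)
    (k : J) (hk : lam k ≠ 0)
    (R : M → Matrix (Fin n) (Fin n) ℝ)
    (hRsym : ∀ m, (R m)ᵀ = R m) (hRidem : ∀ m, R m * R m = R m)
    (hRorth : ∀ m m', m ≠ m' → R m * R m' = 0)
    (hRsub : ∀ m, R m * (∑ j, Q j) = R m)
    (mu : J → M → ℝ)
    (hbalR : ∀ j m, R m * Q j * R m = mu j m • R m)
    (hadjR : ∀ j m m', m ≠ m' → R m * Q j * R m' = 0) :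
    (lam k)⁻¹ • (P * Q k * P) -
        ∑ m ∈ Finset.univ.filter (fun m => mu k m ≠ 0),
          ((lam k)⁻¹ * (mu k m)⁻¹) •
            (((lam k)⁻¹ • (P * Q k * P)) * R m * ((lam k)⁻¹ • (P * Q k * P))) =
      (lam k)⁻¹ •
        (P * (Q k - ∑ m ∈ Finset.univ.filter (fun m => mu k m ≠ 0),
          (mu k m)⁻¹ • (Q k * R m * Q k)) * P) := by
  have hQsumR : ∀ m, (∑ j, Q j) * R m = R m := by
    intro m
    have h := congrArg Matrix.transpose (hRsub m)
    simpa [Matrix.transpose_mul, Matrix.transpose_sum, hQsym, hRsym] using h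
  have hQPQ : Q k * P * (∑ j, Q j) = lam k • Q k := by
    rw [Finset.mul_sum, Finset.sum_eq_single k]
    · exact hbalQ k
    · intro j _ hj
      exact hadjQ k j (Ne.symm hj)
    · intro h; exact absurd (Finset.mem_univ k) h
  have hQPQ' : (∑ j, Q j) * (P * Q k) = lam k • Q k := by
    rw [Finset.sum_mul, Finset.sum_eq_single k]
    · rw [← mul_assoc]; exact hbalQ k
    · intro j _ hj
      rw [← mul_assoc]; exact hadjQ j k hj
    · intro h; exact absurd (Finset.mem_univ k) h
  have hA : ∀ m, P * Q k * P * R m = lam k • (P * Q k * R m) := by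
    intro m
    have h1 : P * Q k * P * R m = P * (Q k * P * (∑ j, Q j)) * R m := by
      conv_lhs => rw [← hQsumR m]
      noncomm_ring
    rw [h1, hQPQ]
    simp [mul_smul_comm, smul_mul_assoc]
  have hB : ∀ m, R m * (P * Q k * P) = lam k • (R m * Q k * P) := by
    intro m
    have h1 : R m * (P * Q k * P) = R m * ((∑ j, Q j) * (P * Q k)) * P := by
      conv_lhs => rw [← hRsub m]
      noncomm_ring
    rw [h1, hQPQ']
    simp [mul_smul_comm, smul_mul_assoc, mul_assoc]
  have hX : ∀ m, (P * Q k * P) * R m * (P * Q k * P)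
      = (lam k * lam k) • (P * (Q k * R m * Q k) * P) := by
    intro m
    rw [hA m, smul_mul_assoc, mul_assoc, hB m]
    simp [mul_smul_comm, smul_smul, mul_assoc]
  rw [mul_sub, sub_mul, smul_sub, Finset.mul_sum, Finset.sum_mul, Finset.smul_sum]
  congr 1
  apply Finset.sum_congr rfl
  intro m hm
  have hmu : mu k m ≠ 0 := (Finset.mem_filter.mp hm).2
  simp only [smul_mul_assoc, mul_smul_comm, smul_smul]
  rw [hX m, smul_smul]
  congr 1
  field_simp
end
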